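/- Downstream classification error decomposes along the singular directions of the projected augmentation matrix: let f ∈ F_φ have normalized matrix F_n ∈ ℝ^{X×d} and let y* : X̄ → {±1}. For every d′ ≤ d with γ_{d′} > 0, L_clf(f; y*) ≤ 2·‖P⊥_{F_n} U_{:d′}‖_F² / γ_{d′} + 2·Σ_{i > d′} (v_iᵀ y*_n)². -/

import Mathlib

open Matrix Finset

variable {Xb X : Type*} [Fintype Xb] [Fintype X] [DecidableEq Xb] [DecidableEq X]

/-- Marginal probability `w(x) = ∑_{x̄} w(x̄)·w(x|x̄)` of an augmentation. -/
noncomputable def wX (wb : Xb → ℝ) (wc : Xb → X → ℝ) (x : X) : ℝ := ∑ xb, wb xb * wc xb x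

/-- Input–augmentation joint matrix `Ā[x̄,x] = w(x̄,x)`. -/
noncomputable def Abar (wb : Xb → ℝ) (wc : Xb → X → ℝ) : Matrix Xb X ℝ :=
  Matrix.of fun xb x => wb xb * wc xb x

/-- Normalized input–augmentation matrix `Ā_n = D̄^{-1/2} Ā D^{-1/2}`. -/
noncomputable def AbarN (wb : Xb → ℝ) (wc : Xb → X → ℝ) : Matrix Xb X ℝ :=
  (Matrix.diagonal fun xb => (Real.sqrt (wb xb))⁻¹) * Abar wb wc *
    (Matrix.diagonal fun x => (Real.sqrt (wX wb wc x))⁻¹)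

/-- Similarity matrix `A[x,x'] = w(x,x')`. -/
noncomputable def Amat (wb : Xb → ℝ) (wc : Xb → X → ℝ) : Matrix X X ℝ :=
  Matrix.of fun x x' => ∑ xb, wb xb * wc xb x * wc xb x'

/-- Normalized similarity matrix `A_n = D^{-1/2} A D^{-1/2}`. -/
noncomputable def AN (wb : Xb → ℝ) (wc : Xb → X → ℝ) : Matrix X X ℝ :=
  (Matrix.diagonal fun x => (Real.sqrt (wX wb wc x))⁻¹) * Amat wb wc *
    (Matrix.diagonal fun x => (Real.sqrt (wX wb wc x))⁻¹)

/-- Normalized matrix of a map `f` w.r.t. weights `w`: rows `√(w x) · f x`. -/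
noncomputable def Nmat {ι : Type*} (w : X → ℝ) (f : X → ι → ℝ) : Matrix X ι ℝ :=
  Matrix.of fun x i => Real.sqrt (w x) * f x i

/-- `P` is the orthogonal projection onto the column space of `B`. -/
def IsProjOnto {n m : Type*} [Fintype n] [Fintype m]
    (P : Matrix n n ℝ) (B : Matrix n m ℝ) : Prop :=
  P.IsSymm ∧ P * P = P ∧ LinearMap.range P.mulVecLin = LinearMap.range B.mulVecLin

/-- Squared Frobenius norm. -/
noncomputable def frobSq {n m : Type*} [Fintype n] [Fintype m] (M : Matrix n m ℝ) : ℝ :=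
  ∑ i, ∑ j, M i j ^ 2

/-- Spectral contrastive loss. -/
noncomputable def Lspec {d : ℕ} (wb : Xb → ℝ) (wc : Xb → X → ℝ) (f : X → Fin d → ℝ) : ℝ :=
  -2 * ∑ x, ∑ x', (∑ xb, wb xb * wc xb x * wc xb x') * (∑ i, f x i * f x' i)
    + ∑ x, ∑ x', wX wb wc x * wX wb wc x' * (∑ i, f x i * f x' i) ^ 2

/-- Augmentation-averaged representation `f̄(x̄) = ∑_x w(x|x̄) f(x)`. -/
noncomputable def fbar {ι : Type*} (wc : Xb → X → ℝ) (f : X → ι → ℝ) (xb : Xb) (i : ι) : ℝ :=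
  ∑ x, wc xb x * f x i

/-- Downstream classification loss. -/
noncomputable def Lclf {d : ℕ} (wb : Xb → ℝ) (wc : Xb → X → ℝ) (f : X → Fin d → ℝ)
    (ystar : Xb → ℝ) : ℝ :=
  ⨅ v : Fin d → ℝ,
    ∑ xb, wb xb * (if ystar xb * (∑ i, v i * fbar wc f xb i) < 0 then (1 : ℝ) else 0)

/-- Regression loss of features `φ` on a target `g` over augmentations. -/
noncomputable def LregPhi {ι : Type*} [Fintype ι] (w : X → ℝ) (φ : X → ι → ℝ) (g : X → ℝ) : ℝ :=
  ⨅ v : ι → ℝ, ∑ x, w x * ((∑ i, v i * φ x i) - g x) ^ 2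

/-- Inconsistency `Δ(g, y*)`. -/
noncomputable def Delta (wb : Xb → ℝ) (wc : Xb → X → ℝ) (g : X → ℝ) (ystar : Xb → ℝ) : ℝ :=
  ∑ xb, wb xb * ∑ x, wc xb x * (if g x ≠ ystar xb then (1 : ℝ) else 0)

/-- Feature covariance `Σ(φ) = ∑_x w(x)·φ(x)φ(x)ᵀ`. -/
noncomputable def SigmaPhi {ι : Type*} [Fintype ι] (w : X → ℝ) (φ : X → ι → ℝ) :
    Matrix ι ι ℝ :=
  Matrix.of fun i j => ∑ x, w x * φ x i * φ x j

/-- Averaged-feature covariance `Σ(φ̄) = ∑_{x̄} w(x̄)·φ̄(x̄)φ̄(x̄)ᵀ`. -/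
noncomputable def SigmaBar {ι : Type*} [Fintype ι] (wb : Xb → ℝ) (wc : Xb → X → ℝ)
    (φ : X → ι → ℝ) : Matrix ι ι ℝ :=
  Matrix.of fun i j => ∑ xb, wb xb * fbar wc φ xb i * fbar wc φ xb j

/-- downstream classification error decomposes along the singular
directions of `P_{Φ_n} Ā_nᵀ`:
`L_clf(f; y*) ≤ 2·‖P⊥_{F_n} U_{:d′}‖_F² / γ_{d′} + 2·Σ_{i>d′} (v_iᵀ y*_n)²`. -/
theorem Lclf_decomposition {D d : ℕ} [Nonempty Xb] [Nonempty X]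
    (wb : Xb → ℝ) (wc : Xb → X → ℝ)
    (hwb : ∀ xb, 0 < wb xb) (hwbsum : ∑ xb, wb xb = 1)
    (hwc : ∀ xb x, 0 ≤ wc xb x) (hwcsum : ∀ xb, ∑ x, wc xb x = 1)
    (hwx : ∀ x, 0 < wX wb wc x)
    (φ : X → Fin D → ℝ)
    (P : Matrix X X ℝ) (hP : IsProjOnto P (Nmat (wX wb wc) φ))
    (W : Matrix (Fin D) (Fin d) ℝ) (f : X → Fin d → ℝ)
    (hf : ∀ x i, f x i = ∑ j, W j i * φ x j)
    (PF : Matrix X X ℝ) (hPF : IsProjOnto PF (Nmat (wX wb wc) f))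
    (γ : ℕ → ℝ) (u : ℕ → X → ℝ) (v : ℕ → Xb → ℝ)
    (hγnonneg : ∀ i, 0 ≤ γ i)
    (hγmono : ∀ i j, 1 ≤ i → i ≤ j → γ j ≤ γ i)
    (hγpad : ∀ i, min (Fintype.card X) (Fintype.card Xb) < i → γ i = 0)
    (hu : ∀ i ∈ Finset.Icc 1 (min (Fintype.card X) (Fintype.card Xb)),
        ∀ j ∈ Finset.Icc 1 (min (Fintype.card X) (Fintype.card Xb)),
        ∑ x, u i x * u j x = if i = j then (1 : ℝ) else 0)
    (hv : ∀ i ∈ Finset.Icc 1 (Fintype.card Xb), ∀ j ∈ Finset.Icc 1 (Fintype.card Xb),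
        ∑ xb, v i xb * v j xb = if i = j then (1 : ℝ) else 0)
    (hsvd : ∀ x xb, (P * (AbarN wb wc)ᵀ) x xb
        = ∑ i ∈ Finset.Icc 1 (min (Fintype.card X) (Fintype.card Xb)),
            Real.sqrt (γ i) * u i x * v i xb)
    (ystar : Xb → ℝ) (hy : ∀ xb, ystar xb = 1 ∨ ystar xb = -1)
    (d' : ℕ) (hd'1 : 1 ≤ d') (hd'd : d' ≤ d) (hγpos : 0 < γ d') :
    Lclf wb wc f ystar
      ≤ 2 * (∑ i ∈ Finset.Icc 1 d', ∑ x, ((1 - PF).mulVec (u i)) x ^ 2) / γ d'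
        + 2 * ∑ i ∈ Finset.Icc (d' + 1) (Fintype.card Xb),
            (∑ xb, v i xb * (Real.sqrt (wb xb) * ystar xb)) ^ 2 := by
  classical
  have hwbnn : ∀ xb, (0:ℝ) ≤ wb xb := fun xb => (hwb xb).le
  have hwxnn : ∀ x, (0:ℝ) ≤ wX wb wc x := fun x => (hwx x).le
  set nb := Fintype.card Xb with hnbdef
  set mm := min (Fintype.card X) nb with hmmdef
  have hd'm : d' ≤ mm := by
    by_contra h
    rw [hγpad d' (lt_of_not_ge h)] at hγpos
    exact lt_irrefl 0 hγpos
  have hsubm : Finset.Icc 1 d' ⊆ Finset.Icc 1 mm := Finset.Icc_subset_Icc le_rfl hd'm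
  have hsubnb : Finset.Icc 1 mm ⊆ Finset.Icc 1 nb :=
    Finset.Icc_subset_Icc le_rfl (min_le_right _ _)
  have hγpos' : ∀ i ∈ Finset.Icc 1 d', 0 < γ i := by
    intro i hi
    obtain ⟨h1, h2⟩ := Finset.mem_Icc.mp hi
    exact lt_of_lt_of_le hγpos (hγmono i d' h1 h2)
  have hsγ : ∀ i ∈ Finset.Icc 1 d', Real.sqrt (γ i) ≠ 0 := fun i hi =>
    Real.sqrt_ne_zero'.mpr (hγpos' i hi)
  have hAn : ∀ xb x, AbarN wb wc xb x
      = Real.sqrt (wb xb) * (wc xb x * (Real.sqrt (wX wb wc x))⁻¹) := by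
    intro xb x
    have hwbx : Real.sqrt (wb xb) * Real.sqrt (wb xb) = wb xb := Real.mul_self_sqrt (hwbnn xb)
    have hne : Real.sqrt (wb xb) ≠ 0 := (Real.sqrt_pos.mpr (hwb xb)).ne'
    rw [AbarN, Matrix.mul_diagonal, Matrix.diagonal_mul]
    show (Real.sqrt (wb xb))⁻¹ * (Abar wb wc xb x) * (Real.sqrt (wX wb wc x))⁻¹ = _
    show (Real.sqrt (wb xb))⁻¹ * (wb xb * wc xb x) * (Real.sqrt (wX wb wc x))⁻¹ = _
    rw [show (Real.sqrt (wb xb))⁻¹ * (wb xb * wc xb x) * (Real.sqrt (wX wb wc x))⁻¹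
        = ((Real.sqrt (wb xb))⁻¹ * wb xb) * (wc xb x * (Real.sqrt (wX wb wc x))⁻¹) from by ring,
      inv_mul_eq_div, Real.div_sqrt]
  -- completeness of the v's
  have hvv : ∀ x x' : Xb, (∑ i ∈ Finset.Icc 1 nb, v i x * v i x')
      = if x = x' then (1:ℝ) else 0 := by
    obtain ⟨e⟩ : Nonempty (Xb ≃ Fin nb) := ⟨Fintype.equivFin Xb⟩
    have hmem : ∀ a : Xb, ((e a : ℕ) + 1) ∈ Finset.Icc 1 nb := by
      intro a
      simp only [Finset.mem_Icc]
      exact ⟨Nat.le_add_left _ _, Nat.succ_le_of_lt (e a).2⟩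
    set M : Matrix Xb Xb ℝ := Matrix.of (fun a b => v ((e a : ℕ) + 1) b) with hM
    have hMMT : M * Mᵀ = 1 := by
      ext a b
      show (∑ xb, v ((e a : ℕ) + 1) xb * v ((e b : ℕ) + 1) xb) = (1 : Matrix Xb Xb ℝ) a b
      rw [hv _ (hmem a) _ (hmem b)]
      by_cases hab : a = b
      · simp [hab, Matrix.one_apply]
      · have hne : (e a : ℕ) + 1 ≠ (e b : ℕ) + 1 := by
          intro hh
          exact hab (e.injective (Fin.ext (by omega)))
        simp [hab, hne, Matrix.one_apply]; omega
    have hMTM : Mᵀ * M = 1 := mul_eq_one_comm.mp hMMT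
    intro x x'
    have h1 : (∑ a : Xb, v ((e a : ℕ) + 1) x * v ((e a : ℕ) + 1) x')
        = if x = x' then (1:ℝ) else 0 := by
      have h2 := congrFun (congrFun hMTM x) x'
      have h3 : (Mᵀ * M) x x' = ∑ a : Xb, v ((e a : ℕ) + 1) x * v ((e a : ℕ) + 1) x' := by
        simp [Matrix.mul_apply, Matrix.transpose_apply, hM]
      rw [h3] at h2
      rw [h2]
      simp [Matrix.one_apply]
    rw [← h1]
    refine Finset.sum_bij' (i := fun b (hb : b ∈ Finset.Icc 1 nb) => e.symm ⟨b - 1, by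
        have := Finset.mem_Icc.mp hb; omega⟩)
      (j := fun a _ => (e a : ℕ) + 1) (fun b hb => Finset.mem_univ _) (fun a _ => hmem a)
      ?_ ?_ ?_
    · intro b hb
      simp only [Equiv.apply_symm_apply]
      have := Finset.mem_Icc.mp hb
      omega
    · intro a _
      simp
    · intro b hb
      have hb' : ((e (e.symm ⟨b - 1, by have := Finset.mem_Icc.mp hb; omega⟩) : ℕ) + 1) = b := by
        simp only [Equiv.apply_symm_apply]
        have := Finset.mem_Icc.mp hb
        omega
      rw [hb']
  -- coefficients and target vector
  set c : ℕ → ℝ := fun i => ∑ xb, v i xb * (Real.sqrt (wb xb) * ystar xb) with hcdef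
  set q : X → ℝ := fun x => ∑ i ∈ Finset.Icc 1 d', c i / Real.sqrt (γ i) * u i x with hqdef
  -- P fixes the u i
  have hPAv : ∀ i ∈ Finset.Icc 1 mm,
      (P * (AbarN wb wc)ᵀ).mulVec (v i) = Real.sqrt (γ i) • u i := by
    intro i hi
    funext x
    show ∑ xb, (P * (AbarN wb wc)ᵀ) x xb * v i xb = Real.sqrt (γ i) * u i x
    simp_rw [hsvd, Finset.sum_mul]
    rw [Finset.sum_comm]
    have hterm : ∀ j ∈ Finset.Icc 1 mm,
        (∑ xb, Real.sqrt (γ j) * u j x * v j xb * v i xb)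
          = if j = i then Real.sqrt (γ j) * u j x else 0 := by
      intro j hj
      have h2 : (∑ xb, Real.sqrt (γ j) * u j x * v j xb * v i xb)
          = Real.sqrt (γ j) * u j x * ∑ xb, v j xb * v i xb := by
        rw [Finset.mul_sum]
        exact Finset.sum_congr rfl fun xb _ => by ring
      rw [h2, hv j (hsubnb hj) i (hsubnb hi)]
      by_cases h : j = i <;> simp [h]
    rw [Finset.sum_congr rfl hterm, Finset.sum_ite_eq' (Finset.Icc 1 mm) i
      (fun j => Real.sqrt (γ j) * u j x)]
    simp [hi]
  have hPu : ∀ i ∈ Finset.Icc 1 d', P.mulVec (u i) = u i := by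
    intro i hi
    have h2 : P.mulVec ((P * (AbarN wb wc)ᵀ).mulVec (v i))
        = (P * (AbarN wb wc)ᵀ).mulVec (v i) := by
      rw [Matrix.mulVec_mulVec, ← Matrix.mul_assoc, hP.2.1]
    rw [hPAv i (hsubm hi), Matrix.mulVec_smul] at h2
    exact smul_right_injective (X → ℝ) (hsγ i hi) h2
  have hPq : P.mulVec q = q := by
    funext x
    show ∑ x', P x x' * q x' = q x
    simp only [hqdef]
    simp_rw [Finset.mul_sum]
    rw [Finset.sum_comm]
    refine Finset.sum_congr rfl fun i hi => ?_
    have hux : (∑ x', P x x' * u i x') = u i x := congrFun (hPu i hi) x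
    calc ∑ x', P x x' * (c i / Real.sqrt (γ i) * u i x')
        = c i / Real.sqrt (γ i) * ∑ x', P x x' * u i x' := by
          rw [Finset.mul_sum]; exact Finset.sum_congr rfl fun x' _ => by ring
      _ = c i / Real.sqrt (γ i) * u i x := by rw [hux]
  have hAq : ∀ xb, (∑ x, AbarN wb wc xb x * q x) = ∑ i ∈ Finset.Icc 1 d', c i * v i xb := by
    intro xb
    have hq' : ∀ x, q x = ∑ x', P x x' * q x' := fun x => (congrFun hPq x).symm
    calc ∑ x, AbarN wb wc xb x * q x
        = ∑ x, AbarN wb wc xb x * ∑ x', P x x' * q x' :=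
          Finset.sum_congr rfl fun x _ => by rw [← hq' x]
      _ = ∑ x', (∑ x, P x' x * AbarN wb wc xb x) * q x' := by
          simp_rw [Finset.mul_sum, Finset.sum_mul]
          rw [Finset.sum_comm]
          refine Finset.sum_congr rfl fun x' _ => Finset.sum_congr rfl fun x _ => ?_
          rw [hP.1.apply x' x]
          ring
      _ = ∑ x', (∑ j ∈ Finset.Icc 1 mm, Real.sqrt (γ j) * u j x' * v j xb) * q x' := by
          refine Finset.sum_congr rfl fun x' _ => ?_
          congr 1
          calc (∑ x, P x' x * AbarN wb wc xb x) = (P * (AbarN wb wc)ᵀ) x' xb := by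
                rw [Matrix.mul_apply]
                exact Finset.sum_congr rfl fun x _ => rfl
            _ = _ := hsvd x' xb
      _ = ∑ j ∈ Finset.Icc 1 mm, Real.sqrt (γ j) * v j xb * (∑ x', u j x' * q x') := by
          simp_rw [Finset.sum_mul]
          rw [Finset.sum_comm]
          refine Finset.sum_congr rfl fun j _ => ?_
          rw [Finset.mul_sum]
          exact Finset.sum_congr rfl fun x' _ => by ring
      _ = ∑ j ∈ Finset.Icc 1 mm, Real.sqrt (γ j) * v j xb *
            (if j ∈ Finset.Icc 1 d' then c j / Real.sqrt (γ j) else 0) := by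
          refine Finset.sum_congr rfl fun j hj => ?_
          congr 1
          simp only [hqdef]
          simp_rw [Finset.mul_sum]
          rw [Finset.sum_comm]
          have hterm : ∀ i ∈ Finset.Icc 1 d',
              (∑ x', u j x' * (c i / Real.sqrt (γ i) * u i x'))
                = if i = j then c i / Real.sqrt (γ i) else 0 := by
            intro i hi
            have h3 : (∑ x', u j x' * (c i / Real.sqrt (γ i) * u i x'))
                = c i / Real.sqrt (γ i) * ∑ x', u i x' * u j x' := by
              rw [Finset.mul_sum]; exact Finset.sum_congr rfl fun x' _ => by ring
            rw [h3, hu i (hsubm hi) j hj]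
            by_cases h : i = j <;> simp [h]
          rw [Finset.sum_congr rfl hterm, Finset.sum_ite_eq' (Finset.Icc 1 d') j
            (fun i => c i / Real.sqrt (γ i))]
      _ = ∑ j ∈ Finset.Icc 1 d', c j * v j xb := by
          simp_rw [mul_ite, mul_zero]
          rw [Finset.sum_ite_mem, Finset.inter_eq_right.mpr hsubm]
          refine Finset.sum_congr rfl fun j hj => ?_
          have h0 := hsγ j hj
          field_simp
  -- contraction property of the normalized matrix
  have hcontract : ∀ z : X → ℝ,
      (∑ xb, (∑ x, AbarN wb wc xb x * z x) ^ 2) ≤ ∑ x, z x ^ 2 := by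
    intro z
    have key : ∀ xb, (∑ x, AbarN wb wc xb x * z x) ^ 2
        ≤ wb xb * ∑ x, wc xb x * ((wX wb wc x)⁻¹ * z x ^ 2) := by
      intro xb
      have hcs := Finset.sum_mul_sq_le_sq_mul_sq Finset.univ
        (fun x => Real.sqrt (wb xb * wc xb x))
        (fun x => Real.sqrt (wc xb x) * ((Real.sqrt (wX wb wc x))⁻¹ * z x))
      have hL : (∑ x, Real.sqrt (wb xb * wc xb x) *
          (Real.sqrt (wc xb x) * ((Real.sqrt (wX wb wc x))⁻¹ * z x)))
          = ∑ x, AbarN wb wc xb x * z x := by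
        refine Finset.sum_congr rfl fun x _ => ?_
        rw [hAn, Real.sqrt_mul (hwbnn xb)]
        rw [show Real.sqrt (wb xb) * Real.sqrt (wc xb x) *
            (Real.sqrt (wc xb x) * ((Real.sqrt (wX wb wc x))⁻¹ * z x))
            = Real.sqrt (wb xb) * (Real.sqrt (wc xb x) * Real.sqrt (wc xb x)) *
              ((Real.sqrt (wX wb wc x))⁻¹ * z x) from by ring,
          Real.mul_self_sqrt (hwc xb x)]
        ring
      have hR1 : (∑ x, Real.sqrt (wb xb * wc xb x) ^ 2) = wb xb := by
        calc ∑ x, Real.sqrt (wb xb * wc xb x) ^ 2 = ∑ x, wb xb * wc xb x :=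
            Finset.sum_congr rfl fun x _ => Real.sq_sqrt (mul_nonneg (hwbnn xb) (hwc xb x))
          _ = wb xb * ∑ x, wc xb x := by rw [Finset.mul_sum]
          _ = wb xb := by rw [hwcsum xb, mul_one]
      have hR2 : (∑ x, (Real.sqrt (wc xb x) * ((Real.sqrt (wX wb wc x))⁻¹ * z x)) ^ 2)
          = ∑ x, wc xb x * ((wX wb wc x)⁻¹ * z x ^ 2) := by
        refine Finset.sum_congr rfl fun x _ => ?_
        rw [mul_pow, mul_pow, Real.sq_sqrt (hwc xb x), inv_pow, Real.sq_sqrt (hwxnn x)]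
      calc (∑ x, AbarN wb wc xb x * z x) ^ 2
          = (∑ x, Real.sqrt (wb xb * wc xb x) *
              (Real.sqrt (wc xb x) * ((Real.sqrt (wX wb wc x))⁻¹ * z x))) ^ 2 := by rw [hL]
        _ ≤ (∑ x, Real.sqrt (wb xb * wc xb x) ^ 2) *
              ∑ x, (Real.sqrt (wc xb x) * ((Real.sqrt (wX wb wc x))⁻¹ * z x)) ^ 2 := hcs
        _ = wb xb * ∑ x, wc xb x * ((wX wb wc x)⁻¹ * z x ^ 2) := by rw [hR1, hR2]
    calc ∑ xb, (∑ x, AbarN wb wc xb x * z x) ^ 2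
        ≤ ∑ xb, wb xb * ∑ x, wc xb x * ((wX wb wc x)⁻¹ * z x ^ 2) :=
          Finset.sum_le_sum fun xb _ => key xb
      _ = ∑ x, (wX wb wc x) * ((wX wb wc x)⁻¹ * z x ^ 2) := by
          simp_rw [Finset.mul_sum]
          rw [Finset.sum_comm]
          refine Finset.sum_congr rfl fun x _ => ?_
          simp only [wX]
          rw [Finset.sum_mul]
          exact Finset.sum_congr rfl fun xb _ => by ring
      _ = ∑ x, z x ^ 2 := by
          refine Finset.sum_congr rfl fun x _ => ?_
          rw [← mul_assoc, mul_inv_cancel₀ (hwx x).ne', one_mul]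
  -- choose the linear probe
  obtain ⟨v₀, hv₀⟩ : ∃ v₀ : Fin d → ℝ, (Nmat (wX wb wc) f).mulVec v₀ = PF.mulVec q := by
    have h1 : PF.mulVec q ∈ LinearMap.range PF.mulVecLin := ⟨q, Matrix.mulVecLin_apply _ _⟩
    rw [hPF.2.2] at h1
    obtain ⟨v₀, hv₀⟩ := h1
    exact ⟨v₀, by simpa [Matrix.mulVecLin_apply] using hv₀⟩
  set Fnv : X → ℝ := (Nmat (wX wb wc) f).mulVec v₀ with hFnvdef
  -- step 1 : 0-1 loss bounded by squared loss
  have hstep1 : Lclf wb wc f ystar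
      ≤ ∑ xb, wb xb * ((∑ i, v₀ i * fbar wc f xb i) - ystar xb) ^ 2 := by
    have hbdd : BddBelow (Set.range fun vv : Fin d → ℝ =>
        ∑ xb, wb xb * (if ystar xb * (∑ i, vv i * fbar wc f xb i) < 0 then (1:ℝ) else 0)) := by
      refine ⟨0, ?_⟩
      rintro r ⟨vv, rfl⟩
      refine Finset.sum_nonneg fun xb _ => ?_
      have h5 : (0:ℝ) ≤ (if ystar xb * (∑ i, vv i * fbar wc f xb i) < 0 then (1:ℝ) else 0) := by
        split_ifs <;> norm_num
      exact mul_nonneg (hwbnn xb) h5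
    have h0 : Lclf wb wc f ystar ≤ ∑ xb, wb xb *
        (if ystar xb * (∑ i, v₀ i * fbar wc f xb i) < 0 then (1:ℝ) else 0) := by
      unfold Lclf
      exact ciInf_le hbdd v₀
    refine le_trans h0 (Finset.sum_le_sum fun xb _ => ?_)
    have hy2 : ystar xb ^ 2 = 1 := by rcases hy xb with h | h <;> rw [h] <;> norm_num
    split_ifs with hcond
    · have h1 : 1 ≤ ((∑ i, v₀ i * fbar wc f xb i) - ystar xb) ^ 2 := by
        nlinarith [sq_nonneg (∑ i, v₀ i * fbar wc f xb i)]
      nlinarith [hwbnn xb]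
    · nlinarith [hwbnn xb, sq_nonneg ((∑ i, v₀ i * fbar wc f xb i) - ystar xb)]
  -- the averaged prediction in normalized coordinates
  have hFnvx : ∀ x, Fnv x = Real.sqrt (wX wb wc x) * ∑ i, f x i * v₀ i := by
    intro x
    show ∑ i, Nmat (wX wb wc) f x i * v₀ i = _
    rw [Finset.mul_sum]
    refine Finset.sum_congr rfl fun i _ => ?_
    show Real.sqrt (wX wb wc x) * f x i * v₀ i = _
    ring
  have hpred : ∀ xb, (∑ x, AbarN wb wc xb x * Fnv x)
      = Real.sqrt (wb xb) * ∑ i, v₀ i * fbar wc f xb i := by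
    intro xb
    have h1 : ∀ x, AbarN wb wc xb x * Fnv x
        = Real.sqrt (wb xb) * (wc xb x * ∑ i, f x i * v₀ i) := by
      intro x
      rw [hAn, hFnvx]
      have hxne : Real.sqrt (wX wb wc x) ≠ 0 := (Real.sqrt_pos.mpr (hwx x)).ne'
      rw [show Real.sqrt (wb xb) * (wc xb x * (Real.sqrt (wX wb wc x))⁻¹) *
          (Real.sqrt (wX wb wc x) * ∑ i, f x i * v₀ i)
          = Real.sqrt (wb xb) * (wc xb x * ∑ i, f x i * v₀ i) *
            ((Real.sqrt (wX wb wc x))⁻¹ * Real.sqrt (wX wb wc x)) from by ring,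
        inv_mul_cancel₀ hxne, mul_one]
    rw [Finset.sum_congr rfl fun x _ => h1 x, ← Finset.mul_sum]
    congr 1
    simp only [fbar]
    simp_rw [Finset.mul_sum]
    rw [Finset.sum_comm]
    exact Finset.sum_congr rfl fun i _ => Finset.sum_congr rfl fun x _ => by ring
  -- expansion of the label vector
  have hexp : ∀ xb, Real.sqrt (wb xb) * ystar xb = ∑ i ∈ Finset.Icc 1 nb, c i * v i xb := by
    intro xb
    symm
    calc ∑ i ∈ Finset.Icc 1 nb, c i * v i xb
        = ∑ i ∈ Finset.Icc 1 nb, ∑ x', (Real.sqrt (wb x') * ystar x') * (v i x' * v i xb) := by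
          refine Finset.sum_congr rfl fun i _ => ?_
          rw [congrFun hcdef i, Finset.sum_mul]
          exact Finset.sum_congr rfl fun x' _ => by ring
      _ = ∑ x', (Real.sqrt (wb x') * ystar x') * ∑ i ∈ Finset.Icc 1 nb, v i x' * v i xb := by
          rw [Finset.sum_comm]
          exact Finset.sum_congr rfl fun x' _ => by rw [Finset.mul_sum]
      _ = ∑ x', (Real.sqrt (wb x') * ystar x') * (if x' = xb then 1 else 0) := by
          exact Finset.sum_congr rfl fun x' _ => by rw [hvv x' xb]
      _ = Real.sqrt (wb xb) * ystar xb := by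
          simp
  have hd'nb : d' ≤ nb := le_trans hd'm (min_le_right _ _)
  have hsplit : ∀ g : ℕ → ℝ, (∑ i ∈ Finset.Icc 1 nb, g i)
      = (∑ i ∈ Finset.Icc 1 d', g i) + ∑ i ∈ Finset.Icc (d' + 1) nb, g i := by
    intro g
    have hun : Finset.Icc 1 nb = Finset.Icc 1 d' ∪ Finset.Icc (d' + 1) nb := by
      ext a
      simp only [Finset.mem_union, Finset.mem_Icc]
      omega
    have hdisj : Disjoint (Finset.Icc 1 d') (Finset.Icc (d' + 1) nb) := by
      rw [Finset.disjoint_left]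
      intro a ha hb
      simp only [Finset.mem_Icc] at ha hb
      omega
    rw [hun, Finset.sum_union hdisj]
  -- key pointwise identity
  have hkey : ∀ xb, Real.sqrt (wb xb) * ((∑ i, v₀ i * fbar wc f xb i) - ystar xb)
      = (∑ x, AbarN wb wc xb x * (Fnv x - q x))
        - ∑ i ∈ Finset.Icc (d' + 1) nb, c i * v i xb := by
    intro xb
    have h1 : ∑ x, AbarN wb wc xb x * (Fnv x - q x)
        = (∑ x, AbarN wb wc xb x * Fnv x) - ∑ x, AbarN wb wc xb x * q x := by
      rw [← Finset.sum_sub_distrib]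
      exact Finset.sum_congr rfl fun x _ => by ring
    rw [h1, hpred xb, hAq xb, mul_sub, hexp xb, hsplit (fun i => c i * v i xb)]
    ring
  -- step 2 : split into projection error and tail
  have hsum2 : (∑ xb, wb xb * ((∑ i, v₀ i * fbar wc f xb i) - ystar xb) ^ 2)
      ≤ 2 * (∑ xb, (∑ x, AbarN wb wc xb x * (Fnv x - q x)) ^ 2)
        + 2 * ∑ xb, (∑ i ∈ Finset.Icc (d' + 1) nb, c i * v i xb) ^ 2 := by
    rw [Finset.mul_sum, Finset.mul_sum, ← Finset.sum_add_distrib]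
    refine Finset.sum_le_sum fun xb _ => ?_
    have h0 : wb xb * ((∑ i, v₀ i * fbar wc f xb i) - ystar xb) ^ 2
        = (Real.sqrt (wb xb) * ((∑ i, v₀ i * fbar wc f xb i) - ystar xb)) ^ 2 := by
      rw [mul_pow, Real.sq_sqrt (hwbnn xb)]
    rw [h0, hkey xb]
    nlinarith [sq_nonneg ((∑ x, AbarN wb wc xb x * (Fnv x - q x))
      + ∑ i ∈ Finset.Icc (d' + 1) nb, c i * v i xb)]
  have hcon2 : (∑ xb, (∑ x, AbarN wb wc xb x * (Fnv x - q x)) ^ 2)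
      ≤ ∑ x, (Fnv x - q x) ^ 2 := hcontract fun x => Fnv x - q x
  -- projection error analysis
  have hErrEq : ∀ x, Fnv x - q x = -((1 - PF).mulVec q x) := by
    intro x
    have h1 := congrFun hv₀ x
    rw [h1, Matrix.sub_mulVec, Matrix.one_mulVec]
    simp only [Pi.sub_apply]
    ring
  have hlin : ∀ x, (1 - PF).mulVec q x
      = ∑ i ∈ Finset.Icc 1 d', c i / Real.sqrt (γ i) * ((1 - PF).mulVec (u i) x) := by
    intro x
    show ∑ x', (1 - PF) x x' * q x' = _
    simp only [hqdef]
    simp_rw [Finset.mul_sum]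
    rw [Finset.sum_comm]
    refine Finset.sum_congr rfl fun i hi => ?_
    calc ∑ x', (1 - PF) x x' * (c i / Real.sqrt (γ i) * u i x')
        = c i / Real.sqrt (γ i) * ∑ x', (1 - PF) x x' * u i x' := by
          rw [Finset.mul_sum]; exact Finset.sum_congr rfl fun x' _ => by ring
      _ = _ := rfl
  have hCS : (∑ x, ((1 - PF).mulVec q x) ^ 2)
      ≤ (∑ i ∈ Finset.Icc 1 d', (c i / Real.sqrt (γ i)) ^ 2) *
        ∑ i ∈ Finset.Icc 1 d', ∑ x, ((1 - PF).mulVec (u i)) x ^ 2 := by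
    calc ∑ x, ((1 - PF).mulVec q x) ^ 2
        ≤ ∑ x, (∑ i ∈ Finset.Icc 1 d', (c i / Real.sqrt (γ i)) ^ 2) *
            ∑ i ∈ Finset.Icc 1 d', ((1 - PF).mulVec (u i) x) ^ 2 := by
          refine Finset.sum_le_sum fun x _ => ?_
          rw [hlin x]
          exact Finset.sum_mul_sq_le_sq_mul_sq _ _ _
      _ = _ := by
          rw [← Finset.mul_sum]
          congr 1
          rw [Finset.sum_comm]
  -- Parseval
  have hpars : (∑ i ∈ Finset.Icc 1 nb, c i ^ 2) = 1 := by
    calc ∑ i ∈ Finset.Icc 1 nb, c i ^ 2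
        = ∑ i ∈ Finset.Icc 1 nb, ∑ xb, (Real.sqrt (wb xb) * ystar xb) * (c i * v i xb) := by
          refine Finset.sum_congr rfl fun i _ => ?_
          calc c i ^ 2 = c i * ∑ xb, v i xb * (Real.sqrt (wb xb) * ystar xb) := by
                rw [sq, congrFun hcdef i]
            _ = ∑ xb, (Real.sqrt (wb xb) * ystar xb) * (c i * v i xb) := by
                rw [Finset.mul_sum]; exact Finset.sum_congr rfl fun xb _ => by ring
      _ = ∑ xb, (Real.sqrt (wb xb) * ystar xb) * ∑ i ∈ Finset.Icc 1 nb, c i * v i xb := by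
          rw [Finset.sum_comm]
          exact Finset.sum_congr rfl fun xb _ => by rw [Finset.mul_sum]
      _ = ∑ xb, (Real.sqrt (wb xb) * ystar xb) * (Real.sqrt (wb xb) * ystar xb) :=
          Finset.sum_congr rfl fun xb _ => by rw [← hexp xb]
      _ = ∑ xb, wb xb := by
          refine Finset.sum_congr rfl fun xb _ => ?_
          have hy2 : ystar xb * ystar xb = 1 := by rcases hy xb with h | h <;> rw [h] <;> norm_num
          calc (Real.sqrt (wb xb) * ystar xb) * (Real.sqrt (wb xb) * ystar xb)
              = (Real.sqrt (wb xb) * Real.sqrt (wb xb)) * (ystar xb * ystar xb) := by ring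
            _ = wb xb := by rw [Real.mul_self_sqrt (hwbnn xb), hy2, mul_one]
      _ = 1 := hwbsum
  have hcoef : (∑ i ∈ Finset.Icc 1 d', (c i / Real.sqrt (γ i)) ^ 2) ≤ (γ d')⁻¹ := by
    have h1 : ∀ i ∈ Finset.Icc 1 d', (c i / Real.sqrt (γ i)) ^ 2 ≤ c i ^ 2 * (γ d')⁻¹ := by
      intro i hi
      rw [div_pow, Real.sq_sqrt (hγnonneg i), div_eq_mul_inv]
      have h2 : (γ i)⁻¹ ≤ (γ d')⁻¹ :=
        inv_anti₀ hγpos (hγmono i d' (Finset.mem_Icc.mp hi).1 (Finset.mem_Icc.mp hi).2)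
      exact mul_le_mul_of_nonneg_left h2 (sq_nonneg _)
    calc ∑ i ∈ Finset.Icc 1 d', (c i / Real.sqrt (γ i)) ^ 2
        ≤ ∑ i ∈ Finset.Icc 1 d', c i ^ 2 * (γ d')⁻¹ := Finset.sum_le_sum h1
      _ = (∑ i ∈ Finset.Icc 1 d', c i ^ 2) * (γ d')⁻¹ := by rw [Finset.sum_mul]
      _ ≤ (∑ i ∈ Finset.Icc 1 nb, c i ^ 2) * (γ d')⁻¹ := by
          refine mul_le_mul_of_nonneg_right ?_ (inv_nonneg.mpr (hγnonneg d'))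
          exact Finset.sum_le_sum_of_subset_of_nonneg
            (Finset.Icc_subset_Icc le_rfl hd'nb) fun i _ _ => sq_nonneg _
      _ = (γ d')⁻¹ := by rw [hpars, one_mul]
  -- tail sum of squares
  have htailsq : (∑ xb, (∑ i ∈ Finset.Icc (d' + 1) nb, c i * v i xb) ^ 2)
      = ∑ i ∈ Finset.Icc (d' + 1) nb, c i ^ 2 := by
    have hsubtail : Finset.Icc (d' + 1) nb ⊆ Finset.Icc 1 nb :=
      Finset.Icc_subset_Icc (by omega) le_rfl
    calc ∑ xb, (∑ i ∈ Finset.Icc (d' + 1) nb, c i * v i xb) ^ 2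
        = ∑ xb, ∑ i ∈ Finset.Icc (d' + 1) nb, ∑ j ∈ Finset.Icc (d' + 1) nb,
            (c i * v i xb) * (c j * v j xb) := by
          refine Finset.sum_congr rfl fun xb _ => ?_
          rw [sq, Finset.sum_mul_sum]
      _ = ∑ i ∈ Finset.Icc (d' + 1) nb, ∑ j ∈ Finset.Icc (d' + 1) nb,
            (c i * c j) * ∑ xb, v i xb * v j xb := by
          rw [Finset.sum_comm]
          refine Finset.sum_congr rfl fun i _ => ?_
          rw [Finset.sum_comm]
          refine Finset.sum_congr rfl fun j _ => ?_
          rw [Finset.mul_sum]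
          exact Finset.sum_congr rfl fun xb _ => by ring
      _ = ∑ i ∈ Finset.Icc (d' + 1) nb, ∑ j ∈ Finset.Icc (d' + 1) nb,
            (c i * c j) * (if i = j then (1:ℝ) else 0) := by
          exact Finset.sum_congr rfl fun i hi => Finset.sum_congr rfl fun j hj => by
            rw [hv i (hsubtail hi) j (hsubtail hj)]
      _ = ∑ i ∈ Finset.Icc (d' + 1) nb, c i ^ 2 := by
          refine Finset.sum_congr rfl fun i hi => ?_
          simp_rw [mul_ite, mul_one, mul_zero]
          rw [Finset.sum_ite_eq (Finset.Icc (d' + 1) nb) i (fun j => c i * c j)]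
          simp [hi, sq]
  -- final assembly
  have hS2nn : (0:ℝ) ≤ ∑ i ∈ Finset.Icc 1 d', ∑ x, ((1 - PF).mulVec (u i)) x ^ 2 :=
    Finset.sum_nonneg fun i _ => Finset.sum_nonneg fun x _ => sq_nonneg _
  have hErrSq : (∑ x, (Fnv x - q x) ^ 2)
      ≤ (γ d')⁻¹ * ∑ i ∈ Finset.Icc 1 d', ∑ x, ((1 - PF).mulVec (u i)) x ^ 2 := by
    calc ∑ x, (Fnv x - q x) ^ 2 = ∑ x, ((1 - PF).mulVec q x) ^ 2 := by
          refine Finset.sum_congr rfl fun x _ => ?_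
          rw [hErrEq x, neg_sq]
      _ ≤ (∑ i ∈ Finset.Icc 1 d', (c i / Real.sqrt (γ i)) ^ 2) *
            ∑ i ∈ Finset.Icc 1 d', ∑ x, ((1 - PF).mulVec (u i)) x ^ 2 := hCS
      _ ≤ (γ d')⁻¹ * ∑ i ∈ Finset.Icc 1 d', ∑ x, ((1 - PF).mulVec (u i)) x ^ 2 :=
          mul_le_mul_of_nonneg_right hcoef hS2nn
  calc Lclf wb wc f ystar
      ≤ ∑ xb, wb xb * ((∑ i, v₀ i * fbar wc f xb i) - ystar xb) ^ 2 := hstep1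
    _ ≤ 2 * (∑ xb, (∑ x, AbarN wb wc xb x * (Fnv x - q x)) ^ 2)
        + 2 * ∑ xb, (∑ i ∈ Finset.Icc (d' + 1) nb, c i * v i xb) ^ 2 := hsum2
    _ ≤ 2 * ((γ d')⁻¹ * ∑ i ∈ Finset.Icc 1 d', ∑ x, ((1 - PF).mulVec (u i)) x ^ 2)
        + 2 * ∑ i ∈ Finset.Icc (d' + 1) nb, c i ^ 2 := by
        rw [htailsq]
        have h6 := le_trans hcon2 hErrSq
        linarith
    _ = 2 * (∑ i ∈ Finset.Icc 1 d', ∑ x, ((1 - PF).mulVec (u i)) x ^ 2) / γ d'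
        + 2 * ∑ i ∈ Finset.Icc (d' + 1) nb,
            (∑ xb, v i xb * (Real.sqrt (wb xb) * ystar xb)) ^ 2 := by
        have hT : (∑ i ∈ Finset.Icc (d' + 1) nb, c i ^ 2)
            = ∑ i ∈ Finset.Icc (d' + 1) nb,
                (∑ xb, v i xb * (Real.sqrt (wb xb) * ystar xb)) ^ 2 :=
          Finset.sum_congr rfl fun i _ => by rw [congrFun hcdef i]
        rw [← hT, div_eq_mul_inv]
        ring
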